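/- Let X be a real Hilbert space, K a compact subset of X, and f : K → ℝ, G : K → X continuous functions satisfying condition (CW¹): whenever x, y ∈ K and f(x) = f(y) + ⟨G(y), x − y⟩, then G(x) = G(y). Then (f, G) also satisfies condition (SCW¹) on K: for all sequences (x_n), (y_n) in K, if f(x_n) − f(y_n) − ⟨G(y_n), x_n − y_n⟩ → 0 then G(x_n) − G(y_n) → 0. -/
import Mathlib


open Set Filter

local notation "⟪" x ", " y "⟫" => @inner ℝ _ _ x y

/-- on a compact set, (CW¹) implies (SCW¹) for continuous jets. -/
theorem CW1_implies_SCW1_on_compact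
    {X : Type*} [NormedAddCommGroup X] [InnerProductSpace ℝ X] [CompleteSpace X]
    (K : Set X) (hK : IsCompact K)
    (f : X → ℝ) (G : X → X) (hf : ContinuousOn f K) (hG : ContinuousOn G K)
    (hCW1 : ∀ x ∈ K, ∀ y ∈ K, f x = f y + ⟪G y, x - y⟫ → G x = G y)
    (x y : ℕ → X) (hx : ∀ n, x n ∈ K) (hy : ∀ n, y n ∈ K)
    (h : Tendsto (fun n => f (x n) - f (y n) - ⟪G (y n), x n - y n⟫) atTop (nhds 0)) :
    Tendsto (fun n => G (x n) - G (y n)) atTop (nhds 0) := by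
  by_contra hc
  rw [Metric.tendsto_atTop] at hc
  push_neg at hc
  obtain ⟨ε, hε, hfreq⟩ := hc
  obtain ⟨φ, hφ, hφε⟩ := Filter.extraction_of_frequently_atTop
    (Filter.frequently_atTop.2 fun N => by
      obtain ⟨n, hn, hn'⟩ := hfreq N; exact ⟨n, hn, hn'⟩)
  obtain ⟨a, haK, ψ, hψ, hxa⟩ := hK.tendsto_subseq (fun n => hx (φ n))
  obtain ⟨b, hbK, χ, hχ, hyb⟩ := hK.tendsto_subseq (fun n => hy (φ (ψ n)))
  set σ : ℕ → ℕ := fun n => φ (ψ (χ n)) with hσ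
  have hσmono : StrictMono σ := hφ.comp (hψ.comp hχ)
  have hxa' : Tendsto (fun n => x (σ n)) atTop (nhds a) := hxa.comp hχ.tendsto_atTop
  have hyb' : Tendsto (fun n => y (σ n)) atTop (nhds b) := hyb
  have hxaK : Tendsto (fun n => x (σ n)) atTop (nhdsWithin a K) :=
    tendsto_nhdsWithin_of_tendsto_nhds_of_eventually_within _ hxa'
      (Filter.Eventually.of_forall fun n => hx _)
  have hybK : Tendsto (fun n => y (σ n)) atTop (nhdsWithin b K) :=
    tendsto_nhdsWithin_of_tendsto_nhds_of_eventually_within _ hyb'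
      (Filter.Eventually.of_forall fun n => hy _)
  have hfa : Tendsto (fun n => f (x (σ n))) atTop (nhds (f a)) :=
    (hf a haK).tendsto.comp hxaK
  have hfb : Tendsto (fun n => f (y (σ n))) atTop (nhds (f b)) :=
    (hf b hbK).tendsto.comp hybK
  have hGa : Tendsto (fun n => G (x (σ n))) atTop (nhds (G a)) :=
    (hG a haK).tendsto.comp hxaK
  have hGb : Tendsto (fun n => G (y (σ n))) atTop (nhds (G b)) :=
    (hG b hbK).tendsto.comp hybK
  have hinner : Tendsto (fun n => ⟪G (y (σ n)), x (σ n) - y (σ n)⟫) atTop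
      (nhds ⟪G b, a - b⟫) := hGb.inner (hxa'.sub hyb')
  have hlim : Tendsto (fun n => f (x (σ n)) - f (y (σ n)) - ⟪G (y (σ n)), x (σ n) - y (σ n)⟫)
      atTop (nhds (f a - f b - ⟪G b, a - b⟫)) := (hfa.sub hfb).sub hinner
  have hlim0 : Tendsto (fun n => f (x (σ n)) - f (y (σ n)) - ⟪G (y (σ n)), x (σ n) - y (σ n)⟫)
      atTop (nhds 0) := h.comp hσmono.tendsto_atTop
  have heq : f a - f b - ⟪G b, a - b⟫ = 0 := tendsto_nhds_unique hlim hlim0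
  have hGab : G a = G b := hCW1 a haK b hbK (by linarith)
  have hdist : Tendsto (fun n => dist (G (x (σ n)) - G (y (σ n))) 0) atTop
      (nhds (dist (G a - G b) 0)) := ((hGa.sub hGb).dist tendsto_const_nhds)
  have hge : ε ≤ dist (G a - G b) 0 :=
    le_of_tendsto_of_tendsto' tendsto_const_nhds hdist fun n => hφε (ψ (χ n))
  rw [hGab, sub_self, dist_self] at hge
  linarith
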